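/- arXiv:2005.05289 — 3 statements merged into one kernel-verified Lean document; each statement's English description precedes it below -/
import Mathlib

section
/- Let q be prime, A a subspace of (Z_q)^λ, and ρ a density operator (positive semidefinite, trace one) on C^{(Z_q)^λ}. The probability that sequentially measuring {Π_A, I−Π_A} and then {FT⁻¹Π_{A⊥}FT, I−FT⁻¹Π_{A⊥}FT} both yield the first outcome equals ⟨A| ρ |A⟩. Formally, Tr[ (FT⁻¹ Π_{A⊥} FT) Π_A ρ Π_A (FT⁻¹ Π_{A⊥} FT) ] = ⟨A| ρ |A⟩. -/
/-- The linear map `v ↦ ∑ i, v i * a i` on `(ZMod q)^l` (pairing with a fixed vector `a`). -/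
noncomputable def dotLin {q l : ℕ} (a : Fin l → ZMod q) :
    (Fin l → ZMod q) →ₗ[ZMod q] ZMod q where
  toFun v := ∑ i, v i * a i
  map_add' x y := by simp [add_mul, Finset.sum_add_distrib]
  map_smul' c x := by simp [Finset.mul_sum, mul_assoc]

/-- The dual subspace `A⊥ = {v : ∀ a ∈ A, ⟨v,a⟩ = 0}` with respect to the standard
bilinear form `⟨v,a⟩ = ∑ i, v i * a i` on `(ZMod q)^l`. -/
noncomputable def dualSub (q l : ℕ) (A : Submodule (ZMod q) (Fin l → ZMod q)) :
    Submodule (ZMod q) (Fin l → ZMod q) :=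
  ⨅ a ∈ A, LinearMap.ker (dotLin a)


/-- The normalized uniform superposition `|A⟩ = |A|^{-1/2} ∑_{a ∈ A} |a⟩`, as a vector in
`ℂ^{(Z_q)^λ}` (a function on the standard basis index set `(Z_q)^λ`). -/
noncomputable def unifSup (q l : ℕ) (A : Submodule (ZMod q) (Fin l → ZMod q)) :
    (Fin l → ZMod q) → ℂ :=
  (A : Set (Fin l → ZMod q)).indicator fun _ => ((Real.sqrt (Nat.card A) : ℂ))⁻¹

/-- The quantum Fourier transform on `ℂ^{(Z_q)^λ}`, as a matrix:
`FT x y = q^{-λ/2} ω^{⟨x,y⟩}` with `ω = exp(2πi/q)`, so that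
`FT|y⟩ = q^{-λ/2} ∑_x ω^{⟨x,y⟩}|x⟩`. -/
noncomputable def FTmat (q l : ℕ) : Matrix (Fin l → ZMod q) (Fin l → ZMod q) ℂ :=
  Matrix.of fun x y =>
    ((Real.sqrt ((q : ℝ) ^ l) : ℂ))⁻¹ *
      Complex.exp (2 * Real.pi * Complex.I / q) ^ (∑ i, x i * y i).val

/-- The coordinate projection `Π_A = ∑_{a ∈ A} |a⟩⟨a|` onto basis states indexed by `A`,
as a diagonal matrix. -/
noncomputable def projMat (q l : ℕ) (A : Submodule (ZMod q) (Fin l → ZMod q)) :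
    Matrix (Fin l → ZMod q) (Fin l → ZMod q) ℂ :=
  Matrix.diagonal ((A : Set (Fin l → ZMod q)).indicator 1)

namespace Stmt6Aux

open Matrix
open scoped Classical

noncomputable def ee (q : ℕ) (t : ZMod q) : ℂ :=
  Complex.exp (2 * Real.pi * Complex.I / q) ^ t.val

section basic
variable (q : ℕ) [Fact (Nat.Prime q)]

lemma prim : IsPrimitiveRoot (Complex.exp (2 * Real.pi * Complex.I / q)) q :=
  Complex.isPrimitiveRoot_exp q (Nat.Prime.ne_zero Fact.out)

lemma ee_add (a b : ZMod q) : ee q (a + b) = ee q a * ee q b := by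
  haveI : NeZero q := ⟨(Fact.out : Nat.Prime q).ne_zero⟩
  have hq1 : Complex.exp (2 * Real.pi * Complex.I / q) ^ q = 1 := (prim q).pow_eq_one
  unfold ee
  rw [← pow_add, ZMod.val_add]
  conv_rhs => rw [← Nat.div_add_mod (a.val + b.val) q]
  rw [pow_add, pow_mul, hq1, one_pow, one_mul]

lemma ee_zero : ee q 0 = 1 := by
  haveI : NeZero q := ⟨(Fact.out : Nat.Prime q).ne_zero⟩
  simp [ee]

lemma ee_ne_one {d : ZMod q} (hd : d ≠ 0) : ee q d ≠ 1 := by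
  haveI : NeZero q := ⟨(Fact.out : Nat.Prime q).ne_zero⟩
  intro h
  have hdvd := (prim q).dvd_of_pow_eq_one _ h
  have hv : d.val = 0 := Nat.eq_zero_of_dvd_of_lt hdvd (ZMod.val_lt d)
  exact hd (by rwa [ZMod.val_eq_zero] at hv)

lemma ee_neg (a : ZMod q) : ee q (-a) = (ee q a)⁻¹ := by
  have h : ee q a * ee q (-a) = 1 := by rw [← ee_add]; simp [ee_zero]
  exact eq_inv_of_mul_eq_one_right h

lemma star_ee (a : ZMod q) : star (ee q a) = ee q (-a) := by
  have habs : ‖Complex.exp (2 * Real.pi * Complex.I / q)‖ = 1 := by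
    have h : (2 * Real.pi * Complex.I / q) = ((2 * Real.pi / q : ℝ) : ℂ) * Complex.I := by
      push_cast; ring
    rw [h, Complex.norm_exp_ofReal_mul_I]
  have habs' : ‖ee q a‖ = 1 := by rw [ee, norm_pow, habs, one_pow]
  rw [ee_neg, Complex.star_def, ← Complex.inv_eq_conj habs']

lemma sum_char_eq_zero {G : Type*} [AddCommGroup G] [Fintype G] (φ : G →+ ZMod q)
    (hφ : ∃ g, φ g ≠ 0) : ∑ g, ee q (φ g) = 0 := by
  obtain ⟨g₀, hg₀⟩ := hφ
  have h1 : ∑ g, ee q (φ g) = ∑ g, ee q (φ (g₀ + g)) :=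
    Fintype.sum_equiv (Equiv.addLeft g₀) _ _ (fun g => rfl) |>.symm
  have h2 : ∑ g, ee q (φ (g₀ + g)) = ee q (φ g₀) * ∑ g, ee q (φ g) := by
    rw [Finset.mul_sum]
    exact Finset.sum_congr rfl fun g _ => by rw [map_add, ee_add]
  have h3 := h1.trans h2
  have hne : ee q (φ g₀) ≠ 1 := ee_ne_one q hg₀
  by_contra hS
  have h4 : (ee q (φ g₀) - 1) * ∑ g, ee q (φ g) = 0 := by linear_combination -h3
  rcases mul_eq_zero.mp h4 with h | h
  · exact hne (sub_eq_zero.mp h)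
  · exact hS h

end basic

section main
variable (q l : ℕ) [Fact (Nat.Prime q)]

noncomputable def cst : ℂ := ((Real.sqrt ((q : ℝ) ^ l) : ℝ) : ℂ)⁻¹

lemma FT_apply (x y : Fin l → ZMod q) :
    FTmat q l x y = cst q l * ee q (∑ i, x i * y i) := rfl

lemma cst_sq : cst q l * cst q l = ((q : ℂ) ^ l)⁻¹ := by
  rw [cst, ← mul_inv, ← Complex.ofReal_mul,
    Real.mul_self_sqrt (by positivity : (0:ℝ) ≤ (q : ℝ) ^ l)]
  push_cast
  ring

lemma cst_ne : cst q l ≠ 0 := by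
  have hq : 0 < q := (Fact.out : Nat.Prime q).pos
  rw [cst]
  have : (0:ℝ) < Real.sqrt ((q : ℝ) ^ l) := Real.sqrt_pos.mpr (by positivity)
  simp only [ne_eq, inv_eq_zero, Complex.ofReal_eq_zero]
  exact this.ne'

lemma star_cst : star (cst q l) = cst q l := by
  simp [cst, ← Complex.ofReal_inv]

noncomputable def uvec {q l : ℕ} (A : Submodule (ZMod q) (Fin l → ZMod q)) :
    (Fin l → ZMod q) → ℂ :=
  fun x => if x ∈ A then 1 else 0

lemma indicator_eq (A : Submodule (ZMod q) (Fin l → ZMod q)) :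
    (A : Set (Fin l → ZMod q)).indicator (1 : (Fin l → ZMod q) → ℂ) = uvec A := by
  funext x
  simp [Set.indicator_apply, uvec]

lemma projMat_eq (A : Submodule (ZMod q) (Fin l → ZMod q)) :
    projMat q l A = Matrix.diagonal (uvec A) := by
  rw [projMat, indicator_eq]

lemma mem_dualSub (A : Submodule (ZMod q) (Fin l → ZMod q)) (x : Fin l → ZMod q) :
    x ∈ dualSub q l A ↔ ∀ a ∈ A, ∑ i, x i * a i = 0 := by
  simp [dualSub, Submodule.mem_iInf, LinearMap.mem_ker, dotLin, LinearMap.coe_mk, AddHom.coe_mk]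

lemma dot_comm (x y : Fin l → ZMod q) : ∑ i, x i * y i = ∑ i, y i * x i :=
  Finset.sum_congr rfl fun i _ => mul_comm _ _

lemma sum_uvec_mul (A : Submodule (ZMod q) (Fin l → ZMod q)) (f : (Fin l → ZMod q) → ℂ) :
    ∑ y, uvec A y * f y = ∑ a : A, f a := by
  have h1 : ∀ y, uvec A y * f y = if y ∈ A then f y else 0 := by
    intro y; rw [uvec]; split <;> simp
  simp_rw [h1]
  rw [← Finset.sum_filter]
  exact (Finset.sum_subtype _ (by simp) f)

lemma card_A (A : Submodule (ZMod q) (Fin l → ZMod q)) :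
    ∑ _a : A, (1:ℂ) = (Nat.card A : ℂ) := by
  rw [Finset.sum_const, Nat.card_eq_fintype_card]
  simp

lemma card_ne (A : Submodule (ZMod q) (Fin l → ZMod q)) : (Nat.card A : ℂ) ≠ 0 := by
  have : 0 < Nat.card A := Nat.card_pos
  exact_mod_cast this.ne'

lemma dot_single (c : Fin l → ZMod q) (i₀ : Fin l) :
    ∑ i, (Pi.single i₀ (1 : ZMod q) : Fin l → ZMod q) i * c i = c i₀ := by
  rw [Finset.sum_eq_single i₀]
  · simp
  · intro i _ hi; simp [Pi.single_apply, hi]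
  · simp

lemma sum_ee_dot (c : Fin l → ZMod q) (hc : c ≠ 0) :
    ∑ y : Fin l → ZMod q, ee q (∑ i, y i * c i) = 0 := by
  have hwit : ∃ y, (dotLin c).toAddMonoidHom y ≠ 0 := by
    obtain ⟨i₀, hi₀⟩ := Function.ne_iff.mp hc
    refine ⟨(Pi.single i₀ (1 : ZMod q) : Fin l → ZMod q), ?_⟩
    show ¬(∑ i, (Pi.single i₀ (1 : ZMod q) : Fin l → ZMod q) i * c i = 0)
    rw [dot_single]
    simpa using hi₀
  exact sum_char_eq_zero q (dotLin c).toAddMonoidHom hwit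

lemma sum_ee_sub (A : Submodule (ZMod q) (Fin l → ZMod q)) (x : Fin l → ZMod q)
    (hx : x ∉ dualSub q l A) :
    ∑ a : A, ee q (∑ i, x i * (a : Fin l → ZMod q) i) = 0 := by
  have hwit : ∃ g : A, ((dotLin x).comp A.subtype).toAddMonoidHom g ≠ 0 := by
    rw [mem_dualSub] at hx
    push_neg at hx
    obtain ⟨a, ha, hne⟩ := hx
    refine ⟨⟨a, ha⟩, ?_⟩
    show ¬(∑ i, a i * x i = 0)
    rw [← dot_comm]
    exact hne
  have h := sum_char_eq_zero q ((dotLin x).comp A.subtype).toAddMonoidHom hwit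
  rw [← h]
  refine Finset.sum_congr rfl fun a _ => ?_
  congr 1
  exact dot_comm q l x a

lemma FT_unitary : (FTmat q l)ᴴ * FTmat q l = 1 := by
  haveI : NeZero q := ⟨(Fact.out : Nat.Prime q).ne_zero⟩
  ext x z
  rw [Matrix.mul_apply]
  have hterm : ∀ y, (FTmat q l)ᴴ x y * FTmat q l y z
      = (cst q l * cst q l) * ee q (∑ i, y i * (z - x) i) := by
    intro y
    rw [Matrix.conjTranspose_apply, FT_apply, FT_apply, star_mul', star_cst, star_ee]
    have hd : -(∑ i, y i * x i) + (∑ i, y i * z i) = ∑ i, y i * (z - x) i := by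
      rw [← Finset.sum_neg_distrib, ← Finset.sum_add_distrib]
      refine Finset.sum_congr rfl fun i _ => ?_
      simp [Pi.sub_apply, mul_sub]
      ring
    calc cst q l * ee q (-(∑ i, y i * x i)) * (cst q l * ee q (∑ i, y i * z i))
        = (cst q l * cst q l) * (ee q (-(∑ i, y i * x i)) * ee q (∑ i, y i * z i)) := by ring
      _ = (cst q l * cst q l) * ee q (∑ i, y i * (z - x) i) := by
          rw [← ee_add, hd]
  simp_rw [hterm]
  rw [← Finset.mul_sum]
  by_cases hxz : x = z
  · subst hxz
    have h1 : ∀ y : Fin l → ZMod q, ee q (∑ i, y i * (x - x) i) = 1 := by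
      intro y
      have : (∑ i, y i * (x - x) i) = 0 := by simp
      rw [this, ee_zero]
    simp_rw [h1]
    rw [Finset.sum_const, Matrix.one_apply_eq]
    have hcard : (Fintype.card (Fin l → ZMod q)) = q ^ l := by
      simp [ZMod.card]
    simp only [Finset.card_univ, hcard, nsmul_eq_mul, mul_one]
    rw [cst_sq]
    have : ((q : ℂ) ^ l) ≠ 0 := by
      have hq : 0 < q := (Fact.out : Nat.Prime q).pos
      exact pow_ne_zero _ (Nat.cast_ne_zero.mpr hq.ne')
    field_simp
    exact Nat.cast_pow q l
  · have hc : z - x ≠ 0 := sub_ne_zero.mpr (Ne.symm hxz)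
    rw [sum_ee_dot q l _ hc, mul_zero, Matrix.one_apply_ne hxz]

lemma FT_mulVec_u (A : Submodule (ZMod q) (Fin l → ZMod q)) :
    FTmat q l *ᵥ uvec A = (cst q l * (Nat.card A : ℂ)) • uvec (dualSub q l A) := by
  haveI : NeZero q := ⟨(Fact.out : Nat.Prime q).ne_zero⟩
  funext x
  show ∑ y, FTmat q l x y * uvec A y = _
  have h1 : ∀ y, FTmat q l x y * uvec A y = cst q l * (uvec A y * ee q (∑ i, x i * y i)) := by
    intro y; rw [FT_apply]; ring
  simp_rw [h1]
  rw [← Finset.mul_sum, sum_uvec_mul]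
  by_cases hx : x ∈ dualSub q l A
  · have h2 : ∀ a : A, ee q (∑ i, x i * (a : Fin l → ZMod q) i) = 1 := by
      intro a
      rw [(mem_dualSub q l A x).mp hx a a.2, ee_zero]
    simp_rw [h2]
    rw [card_A]
    show _ = (cst q l * (Nat.card A : ℂ)) * uvec (dualSub q l A) x
    simp [uvec, hx]
  · rw [sum_ee_sub q l A x hx, mul_zero]
    show (0:ℂ) = (cst q l * (Nat.card A : ℂ)) * uvec (dualSub q l A) x
    simp [uvec, hx]

lemma FTH_mulVec_w (A : Submodule (ZMod q) (Fin l → ZMod q)) :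
    (FTmat q l)ᴴ *ᵥ uvec (dualSub q l A) = (cst q l * (Nat.card A : ℂ))⁻¹ • uvec A := by
  have hne : cst q l * (Nat.card A : ℂ) ≠ 0 := mul_ne_zero (cst_ne q l) (card_ne q l A)
  have h1 : (FTmat q l)ᴴ *ᵥ (FTmat q l *ᵥ uvec A) = uvec A := by
    rw [Matrix.mulVec_mulVec, FT_unitary, Matrix.one_mulVec]
  rw [FT_mulVec_u, Matrix.mulVec_smul] at h1
  rw [← h1, smul_smul, inv_mul_cancel₀ hne, one_smul]

lemma QFP (A : Submodule (ZMod q) (Fin l → ZMod q)) :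
    projMat q l (dualSub q l A) * FTmat q l * projMat q l A
      = cst q l • Matrix.vecMulVec (uvec (dualSub q l A)) (uvec A) := by
  haveI : NeZero q := ⟨(Fact.out : Nat.Prime q).ne_zero⟩
  rw [projMat_eq, projMat_eq]
  ext x y
  rw [Matrix.mul_diagonal, Matrix.diagonal_mul, Matrix.smul_apply, Matrix.vecMulVec_apply,
    FT_apply]
  by_cases hx : x ∈ dualSub q l A
  · by_cases hy : y ∈ A
    · have h0 : (∑ i, x i * y i) = 0 := (mem_dualSub q l A x).mp hx y hy
      rw [h0, ee_zero]
      simp [uvec, hx, hy]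
    · simp [uvec, hx, hy]
  · simp [uvec, hx]

lemma mul_vecMulVec (X : Matrix (Fin l → ZMod q) (Fin l → ZMod q) ℂ)
    (a b : (Fin l → ZMod q) → ℂ) :
    X * Matrix.vecMulVec a b = Matrix.vecMulVec (X *ᵥ a) b := by
  ext x y
  simp [Matrix.mul_apply, Matrix.vecMulVec_apply, Matrix.mulVec, dotProduct,
    Finset.sum_mul, mul_assoc]

lemma vecMulVec_smul_left (r : ℂ) (a b : (Fin l → ZMod q) → ℂ) :
    Matrix.vecMulVec (r • a) b = r • Matrix.vecMulVec a b := by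
  ext x y
  simp [Matrix.vecMulVec_apply, mul_assoc]

lemma vecMulVec_mulVec (a b v : (Fin l → ZMod q) → ℂ) :
    Matrix.vecMulVec a b *ᵥ v = (b ⬝ᵥ v) • a := by
  funext x
  simp only [Matrix.mulVec, Matrix.vecMulVec_apply, dotProduct, Pi.smul_apply,
    smul_eq_mul, Finset.sum_mul]
  exact Finset.sum_congr rfl fun y _ => by ring

lemma key (A : Submodule (ZMod q) (Fin l → ZMod q)) :
    (FTmat q l)⁻¹ * projMat q l (dualSub q l A) * FTmat q l * projMat q l A
      = (Nat.card A : ℂ)⁻¹ • Matrix.vecMulVec (uvec A) (uvec A) := by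
  have hinv : (FTmat q l)⁻¹ = (FTmat q l)ᴴ := Matrix.inv_eq_left_inv (FT_unitary q l)
  rw [hinv]
  have hassoc : (FTmat q l)ᴴ * projMat q l (dualSub q l A) * FTmat q l * projMat q l A
      = (FTmat q l)ᴴ * (projMat q l (dualSub q l A) * FTmat q l * projMat q l A) := by
    simp only [Matrix.mul_assoc]
  rw [hassoc, QFP, Matrix.mul_smul, mul_vecMulVec, FTH_mulVec_w, vecMulVec_smul_left,
    smul_smul]
  congr 1
  have h1 := cst_ne q l
  have h2 := card_ne q l A
  field_simp

lemma uvec_mulVec (A : Submodule (ZMod q) (Fin l → ZMod q)) :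
    projMat q l A *ᵥ uvec A = uvec A := by
  rw [projMat_eq]
  funext x
  rw [Matrix.mulVec_diagonal]
  by_cases hx : x ∈ A <;> simp [uvec, hx]

lemma uvec_dot (A : Submodule (ZMod q) (Fin l → ZMod q)) :
    uvec A ⬝ᵥ uvec A = (Nat.card A : ℂ) := by
  rw [dotProduct, sum_uvec_mul]
  rw [← card_A q l A]
  exact Finset.sum_congr rfl fun a _ => by simp [uvec, a.2]

end main

end Stmt6Aux

open Matrix in
open scoped ComplexOrder in
/-- For a density operator `ρ` on `ℂ^{(Z_q)^λ}` and a subspace `A`, the probability that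
sequentially measuring `{Π_A, I − Π_A}` and then `{FT⁻¹Π_{A⊥}FT, I − FT⁻¹Π_{A⊥}FT}` both
yield the first outcome equals `⟨A|ρ|A⟩`:
`Tr[(FT⁻¹Π_{A⊥}FT) Π_A ρ Π_A (FT⁻¹Π_{A⊥}FT)] = ⟨A|ρ|A⟩`. -/
theorem stmt6 (q l : ℕ) [Fact (Nat.Prime q)]
    (A : Submodule (ZMod q) (Fin l → ZMod q))
    (ρ : Matrix (Fin l → ZMod q) (Fin l → ZMod q) ℂ)
    (hρ : ρ.PosSemidef) (hρtr : ρ.trace = 1) :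
    ((FTmat q l)⁻¹ * projMat q l (dualSub q l A) * FTmat q l * projMat q l A * ρ *
        projMat q l A * ((FTmat q l)⁻¹ * projMat q l (dualSub q l A) * FTmat q l)).trace =
      star (unifSup q l A) ⬝ᵥ ρ.mulVec (unifSup q l A) := by
    classical
  obtain ⟨u, NN, M, s, N, hu, hNN, hM, hs, hN⟩ :
      ∃ (u : (Fin l → ZMod q) → ℂ) (NN M : Matrix (Fin l → ZMod q) (Fin l → ZMod q) ℂ)
        (s N : ℂ), u = Stmt6Aux.uvec A ∧
        NN = (FTmat q l)⁻¹ * projMat q l (dualSub q l A) * FTmat q l ∧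
        M = N⁻¹ • Matrix.vecMulVec u u ∧
        s = ((Real.sqrt (Nat.card A) : ℝ) : ℂ)⁻¹ ∧ N = (Nat.card A : ℂ) :=
    ⟨_, _, _, _, _, rfl, rfl, rfl, rfl, rfl⟩
  have hNne : N ≠ 0 := hN ▸ Stmt6Aux.card_ne q l A
  have hkey : NN * projMat q l A = M := by
    rw [hNN, hM, hu, hN]; exact Stmt6Aux.key q l A
  have hPu : projMat q l A *ᵥ u = u := by rw [hu]; exact Stmt6Aux.uvec_mulVec q l A
  have huu : u ⬝ᵥ u = N := by rw [hu, hN]; exact Stmt6Aux.uvec_dot q l A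
  have hMu : M *ᵥ u = u := by
    rw [hM, Matrix.smul_mulVec, Stmt6Aux.vecMulVec_mulVec, huu, smul_smul,
      inv_mul_cancel₀ hNne, one_smul]
  have hNNu : NN *ᵥ u = u := by
    rw [← hPu, Matrix.mulVec_mulVec, hkey, hMu, hPu]
  have hNNM : NN * M = M := by
    rw [hM, Matrix.mul_smul, Stmt6Aux.mul_vecMulVec, hNNu]
  have hPM : projMat q l A * M = M := by
    rw [hM, Matrix.mul_smul, Stmt6Aux.mul_vecMulVec, hPu]
  -- rewrite goal
  rw [← hNN, hkey]
  -- now: trace (M * ρ * projMat A * NN) = RHS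
  rw [Matrix.trace_mul_comm]
  rw [← Matrix.mul_assoc, ← Matrix.mul_assoc, hNNM]
  rw [Matrix.trace_mul_comm, ← Matrix.mul_assoc, hPM]
  -- final computation
  have hv : ∀ x, unifSup q l A x = s * u x := by
    intro x
    rw [hu, hs, unifSup, Set.indicator_apply]
    by_cases hx : x ∈ A <;> simp [Stmt6Aux.uvec, hx]
  have hstar : ∀ x, star (unifSup q l A x) = unifSup q l A x := by
    intro x
    rw [unifSup, Set.indicator_apply]
    by_cases hx : x ∈ A <;>
      simp [hx, Complex.star_def, ← Complex.ofReal_inv, Complex.conj_ofReal]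
  have hss : s * s = N⁻¹ := by
    rw [hs, hN, ← mul_inv, ← Complex.ofReal_mul,
      Real.mul_self_sqrt (Nat.cast_nonneg _)]
    push_cast
    ring
  have hLHS : (M * ρ).trace = ∑ x, ∑ y, (N⁻¹ * (u x * u y)) * ρ y x := by
    rw [Matrix.trace]
    refine Finset.sum_congr rfl fun x _ => ?_
    rw [Matrix.diag_apply, Matrix.mul_apply]
    refine Finset.sum_congr rfl fun y _ => ?_
    rw [hM, Matrix.smul_apply, Matrix.vecMulVec_apply, smul_eq_mul]
  have hRHS : star (unifSup q l A) ⬝ᵥ ρ.mulVec (unifSup q l A)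
      = ∑ x, ∑ y, (s * u x) * (ρ x y * (s * u y)) := by
    rw [dotProduct]
    refine Finset.sum_congr rfl fun x _ => ?_
    rw [Pi.star_apply, hstar, hv, Matrix.mulVec, dotProduct, Finset.mul_sum]
    refine Finset.sum_congr rfl fun y _ => ?_
    rw [hv]
  rw [hLHS, hRHS, Finset.sum_comm]
  refine Finset.sum_congr rfl fun x _ => Finset.sum_congr rfl fun y _ => ?_
  linear_combination (-(u x * u y * ρ x y)) * hss
end

section
/- Let φ, ψ be unit vectors in a complex Hilbert space with |⟨φ,ψ⟩| ≥ 1 − δ (0 ≤ δ ≤ 1), and let O be a unitary operator. Then |⟨φ, Oψ⟩| ≥ (1−δ)·|⟨ψ, Oψ⟩| − √(2δ − δ²). -/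
/-- If unit vectors `φ, ψ` satisfy `|⟨φ,ψ⟩| ≥ 1 − δ` (`0 ≤ δ ≤ 1`) and `O` is a unitary
operator, then `|⟨φ, Oψ⟩| ≥ (1−δ)·|⟨ψ, Oψ⟩| − √(2δ − δ²)`. -/
theorem stmt8 {E : Type*} [NormedAddCommGroup E] [InnerProductSpace ℂ E]
    (φ ψ : E) (hφ : ‖φ‖ = 1) (hψ : ‖ψ‖ = 1) (δ : ℝ) (hδ0 : 0 ≤ δ) (hδ1 : δ ≤ 1)
    (h : ‖(inner ℂ φ ψ : ℂ)‖ ≥ 1 - δ) (O : E ≃ₗᵢ[ℂ] E) :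
    ‖(inner ℂ φ (O ψ) : ℂ)‖ ≥ (1 - δ) * ‖(inner ℂ ψ (O ψ) : ℂ)‖ - Real.sqrt (2 * δ - δ ^ 2) := by
  set c : ℂ := inner ℂ ψ φ with hc
  have hcn : ‖c‖ = ‖(inner ℂ φ ψ : ℂ)‖ := by
    have h1 : (starRingEnd ℂ) (inner ℂ φ ψ : ℂ) = c := inner_conj_symm ψ φ
    rw [← h1, Complex.norm_conj]
  set w : E := φ - c • ψ with hw
  have hψψ : (inner ℂ ψ ψ : ℂ) = 1 := by
    rw [inner_self_eq_norm_sq_to_K, hψ]; norm_num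
  have hwi : (inner ℂ ψ w : ℂ) = 0 := by
    simp [hw, inner_sub_right, inner_smul_right, hψψ, hψ, hc]
  have hdecomp : φ = c • ψ + w := by rw [hw]; abel
  have hpyth : ‖w‖ ^ 2 = 1 - ‖c‖ ^ 2 := by
    have h1 : ‖φ‖ ^ 2 = ‖c • ψ‖ ^ 2 + 2 * Complex.re (inner ℂ (c • ψ) w) + ‖w‖ ^ 2 := by
      rw [hdecomp]; exact norm_add_sq (𝕜 := ℂ) _ _
    have h2 : (inner ℂ (c • ψ) w : ℂ) = 0 := by
      rw [inner_smul_left, hwi, mul_zero]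
    rw [h2, hφ, norm_smul, hψ] at h1
    simp at h1
    nlinarith [h1]
  have hcge : ‖c‖ ≥ 1 - δ := hcn ▸ h
  have hwle : ‖w‖ ≤ Real.sqrt (2 * δ - δ ^ 2) := by
    have hw2 : ‖w‖ ^ 2 ≤ 2 * δ - δ ^ 2 := by nlinarith [norm_nonneg w, norm_nonneg c]
    calc ‖w‖ = Real.sqrt (‖w‖ ^ 2) := by rw [Real.sqrt_sq (norm_nonneg w)]
    _ ≤ Real.sqrt (2 * δ - δ ^ 2) := Real.sqrt_le_sqrt hw2
  have hsplit : (inner ℂ φ (O ψ) : ℂ) =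
      (starRingEnd ℂ) c * inner ℂ ψ (O ψ) + inner ℂ w (O ψ) := by
    rw [hdecomp, inner_add_left, inner_smul_left]
  have hB : ‖(inner ℂ w (O ψ) : ℂ)‖ ≤ Real.sqrt (2 * δ - δ ^ 2) := by
    calc ‖(inner ℂ w (O ψ) : ℂ)‖ ≤ ‖w‖ * ‖O ψ‖ := norm_inner_le_norm _ _
    _ = ‖w‖ := by rw [O.norm_map, hψ, mul_one]
    _ ≤ _ := hwle
  have hA : ‖(starRingEnd ℂ) c * (inner ℂ ψ (O ψ) : ℂ)‖
      ≥ (1 - δ) * ‖(inner ℂ ψ (O ψ) : ℂ)‖ := by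
    rw [norm_mul, Complex.norm_conj]
    exact mul_le_mul_of_nonneg_right hcge (norm_nonneg _)
  have htri : ‖(inner ℂ φ (O ψ) : ℂ)‖ ≥
      ‖(starRingEnd ℂ) c * (inner ℂ ψ (O ψ) : ℂ)‖ - ‖(inner ℂ w (O ψ) : ℂ)‖ := by
    rw [hsplit]
    set X := (starRingEnd ℂ) c * (inner ℂ ψ (O ψ) : ℂ)
    set Y := (inner ℂ w (O ψ) : ℂ)
    have h3 : ‖X‖ ≤ ‖X + Y‖ + ‖Y‖ := by
      calc ‖X‖ = ‖(X + Y) + (-Y)‖ := by rw [add_neg_cancel_right]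
      _ ≤ ‖X + Y‖ + ‖-Y‖ := norm_add_le _ _
      _ = ‖X + Y‖ + ‖Y‖ := by rw [norm_neg]
    linarith
  linarith
end

section
/- (Gentle measurement / Almost-As-Good-As-New Lemma.) Let ρ be a density operator on C^d, let U be a unitary on C^d ⊗ C^{d'}, and let Π₀ be an orthogonal projection on C^d ⊗ C^{d'} with Π₁ = I − Π₀. Suppose Tr[Π₀ U (ρ ⊗ |0⟩⟨0|) U†] = 1 − ε. Define ρ̃ = Tr_{d'}[ U† ( Π₀ U (ρ⊗|0⟩⟨0|) U† Π₀ + Π₁ U (ρ⊗|0⟩⟨0|) U† Π₁ ) U ]. Then (1/2)·‖ρ − ρ̃‖₁ ≤ √ε. -/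
open scoped ComplexOrder

/-- The trace norm (sum of singular values) of a square complex matrix:
the sum of the square roots of the eigenvalues of `Mᴴ * M`. -/
noncomputable def traceNorm {n : Type*} [Fintype n] [DecidableEq n]
    (M : Matrix n n ℂ) : ℝ :=
  ∑ i, Real.sqrt ((Matrix.posSemidef_conjTranspose_mul_self M).1.eigenvalues i)

open Matrix Kronecker

open scoped MatrixOrder

/-- Partial trace over the second (ancilla) tensor factor. -/
noncomputable def ptraceRight {ι κ : Type*} [Fintype κ]
    (M : Matrix (ι × κ) (ι × κ) ℂ) : Matrix ι ι ℂ :=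
  Matrix.of fun i j => ∑ k, M (i, k) (j, k)

section Aux

set_option linter.unusedSectionVars false

variable {n : Type*} [Fintype n] [DecidableEq n]

lemma aux_diag_nonneg {A : Matrix n n ℂ} (hA : A.PosSemidef) (i : n) : 0 ≤ A i i := by
  have h := hA.dotProduct_mulVec_nonneg (Pi.single i 1)
  have : star (Pi.single i 1 : n → ℂ) ⬝ᵥ (A *ᵥ Pi.single i 1) = A i i := by
    simp [dotProduct, mulVec, Pi.single_apply, Finset.sum_ite_eq, Finset.sum_ite_eq']
  rwa [this] at h

lemma aux_trace_re_nonneg {A : Matrix n n ℂ} (hA : A.PosSemidef) : 0 ≤ (A.trace).re := by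
  have h : 0 ≤ A.trace := Finset.sum_nonneg fun i _ => aux_diag_nonneg hA i
  rw [Complex.le_def] at h
  exact h.1

lemma aux_contract {C : Matrix n n ℂ} (hC : (1 - Cᴴ * C).PosSemidef) (M : Matrix n n ℂ) :
    ((Mᴴ * (Cᴴ * C) * M).trace).re ≤ ((Mᴴ * M).trace).re := by
  have hpsd : (Mᴴ * (1 - Cᴴ * C) * M).PosSemidef := hC.conjTranspose_mul_mul_same M
  have h0 : 0 ≤ ((Mᴴ * (1 - Cᴴ * C) * M).trace).re := aux_trace_re_nonneg hpsd
  have heq : Mᴴ * (1 - Cᴴ * C) * M = Mᴴ * M - Mᴴ * (Cᴴ * C) * M := by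
    noncomm_ring
  rw [heq, Matrix.trace_sub, Complex.sub_re] at h0
  linarith

lemma aux_fro (A : Matrix n n ℂ) :
    ((Aᴴ * A).trace).re = ∑ p : n × n, ‖A p.1 p.2‖ ^ 2 := by
  have h : (Aᴴ * A).trace = ∑ p : n × n, ((starRingEnd ℂ) (A p.2 p.1) * A p.2 p.1) := by
    simp only [Matrix.trace, Matrix.diag, Matrix.mul_apply, Matrix.conjTranspose_apply]
    rw [Fintype.sum_prod_type]
    rfl
  rw [h]
  rw [Complex.re_sum]
  rw [← (Equiv.prodComm n n).sum_comp (fun p : n × n => ‖A p.1 p.2‖ ^ 2)]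
  apply Finset.sum_congr rfl
  intro p _
  simp [mul_comm, Complex.mul_conj, Complex.sq_norm]

lemma aux_cs (A B : Matrix n n ℂ) :
    ‖(Aᴴ * B).trace‖ ≤
      Real.sqrt (((Aᴴ * A).trace).re) * Real.sqrt (((Bᴴ * B).trace).re) := by
  classical
  let u : EuclideanSpace ℂ (n × n) := WithLp.toLp 2 (fun p : n × n => A p.1 p.2)
  let v : EuclideanSpace ℂ (n × n) := WithLp.toLp 2 (fun p : n × n => B p.1 p.2)
  have h1 : (Aᴴ * B).trace = inner ℂ u v := by
    simp only [EuclideanSpace.inner_eq_star_dotProduct]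
    simp only [Matrix.trace, Matrix.diag, Matrix.mul_apply, Matrix.conjTranspose_apply,
      dotProduct, Pi.star_apply, RCLike.star_def]
    rw [Fintype.sum_prod_type]
    rw [Finset.sum_comm]
    exact Finset.sum_congr rfl fun _ _ => Finset.sum_congr rfl fun _ _ => mul_comm _ _
  have h2 : ‖u‖ = Real.sqrt (((Aᴴ * A).trace).re) := by
    rw [EuclideanSpace.norm_eq, aux_fro]
  have h3 : ‖v‖ = Real.sqrt (((Bᴴ * B).trace).re) := by
    rw [EuclideanSpace.norm_eq, aux_fro]
  calc ‖(Aᴴ * B).trace‖ = ‖inner ℂ u v‖ := by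
        rw [h1]
    _ ≤ ‖u‖ * ‖v‖ := norm_inner_le_norm u v
    _ = _ := by rw [h2, h3]

lemma aux_key {σ C P Q : Matrix n n ℂ} (hσ : σ.PosSemidef)
    (hC : (1 - Cᴴ * C).PosSemidef)
    (hPh : Pᴴ = P) (hPP : P * P = P) (hQh : Qᴴ = Q) (hQQ : Q * Q = Q) :
    ‖(C * (P * σ * Q)).trace‖ ≤
      Real.sqrt (((Q * σ).trace).re) * Real.sqrt (((P * σ).trace).re) := by
  set R := CFC.sqrt σ with hRdef
  have hR2 : R * R = σ := CFC.sqrt_mul_sqrt_self σ hσ.nonneg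
  have hRh : Rᴴ = R := (CFC.sqrt_nonneg σ).posSemidef.1
  have hsplit : C * (P * σ * Q) = (C * (P * R)) * (R * Q) := by
    rw [← hR2]; simp only [Matrix.mul_assoc]
  have h1 : (C * (P * σ * Q)).trace = ((Q * R)ᴴ * (C * (P * R))).trace := by
    rw [hsplit, Matrix.trace_mul_comm, Matrix.conjTranspose_mul, hRh, hQh]
  have e1 : ((Q * R)ᴴ * (Q * R)).trace = (Q * σ).trace := by
    rw [Matrix.conjTranspose_mul, hRh, hQh]
    calc (R * Q * (Q * R)).trace = ((Q * R) * (R * Q)).trace := Matrix.trace_mul_comm _ _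
      _ = ((Q * σ) * Q).trace := by
          rw [show (Q * R) * (R * Q) = (Q * σ) * Q by rw [← hR2]; simp only [Matrix.mul_assoc]]
      _ = (Q * (Q * σ)).trace := Matrix.trace_mul_comm _ _
      _ = (Q * σ).trace := by rw [← Matrix.mul_assoc, hQQ]
  have e2 : (((P * R))ᴴ * (P * R)).trace = (P * σ).trace := by
    rw [Matrix.conjTranspose_mul, hRh, hPh]
    calc (R * P * (P * R)).trace = ((P * R) * (R * P)).trace := Matrix.trace_mul_comm _ _
      _ = ((P * σ) * P).trace := by
          rw [show (P * R) * (R * P) = (P * σ) * P by rw [← hR2]; simp only [Matrix.mul_assoc]]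
      _ = (P * (P * σ)).trace := Matrix.trace_mul_comm _ _
      _ = (P * σ).trace := by rw [← Matrix.mul_assoc, hPP]
  have e3 : ((C * (P * R))ᴴ * (C * (P * R))).trace = ((P * R)ᴴ * (Cᴴ * C) * (P * R)).trace := by
    rw [Matrix.conjTranspose_mul]
    simp only [Matrix.mul_assoc]
  have hcs := aux_cs (Q * R) (C * (P * R))
  rw [h1]
  refine hcs.trans ?_
  rw [e1]
  apply mul_le_mul_of_nonneg_left _ (Real.sqrt_nonneg _)
  apply Real.sqrt_le_sqrt
  rw [e3, ← e2]
  exact aux_contract hC (P * R)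

lemma aux_conj_mul (V D1 D2 : Matrix n n ℂ) (hV1 : Vᴴ * V = 1) :
    (V * D1 * Vᴴ) * (V * D2 * Vᴴ) = V * (D1 * D2) * Vᴴ := by
  have h : Vᴴ * (V * (D2 * Vᴴ)) = D2 * Vᴴ := by
    rw [← Matrix.mul_assoc, hV1, Matrix.one_mul]
  simp only [Matrix.mul_assoc, h]

lemma aux_conj_diag_trace {V : Matrix n n ℂ} (hV1 : Vᴴ * V = 1) (f : n → ℂ) :
    (V * Matrix.diagonal f * Vᴴ).trace = ∑ i, f i := by
  rw [Matrix.trace_mul_comm, ← Matrix.mul_assoc, hV1, Matrix.one_mul, Matrix.trace_diagonal]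

lemma aux_sign (x : ℝ) : Real.sign x * x = |x| := by
  rcases lt_trichotomy x 0 with h | h | h
  · rw [Real.sign_of_neg h, abs_of_neg h]; ring
  · simp [h]
  · rw [Real.sign_of_pos h, abs_of_pos h]; ring

lemma aux_sign_sq_le (x : ℝ) : Real.sign x * Real.sign x ≤ 1 := by
  rcases lt_trichotomy x 0 with h | h | h
  · rw [Real.sign_of_neg h]; norm_num
  · simp [h]
  · rw [Real.sign_of_pos h]; norm_num

lemma aux_sign_matrix {Δ : Matrix n n ℂ} (hΔ : Δ.IsHermitian) :
    ∃ S : Matrix n n ℂ, (1 - Sᴴ * S).PosSemidef ∧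
      (S * Δ).trace = ((traceNorm Δ : ℝ) : ℂ) := by
  classical
  set V : Matrix n n ℂ := (hΔ.eigenvectorUnitary : Matrix n n ℂ) with hVdef
  have hV1 : Vᴴ * V = 1 := by
    rw [← Matrix.star_eq_conjTranspose]
    exact Matrix.mem_unitaryGroup_iff'.mp hΔ.eigenvectorUnitary.2
  have hV2 : V * Vᴴ = 1 := by
    rw [← Matrix.star_eq_conjTranspose]
    exact Matrix.mem_unitaryGroup_iff.mp hΔ.eigenvectorUnitary.2
  set lam : n → ℝ := hΔ.eigenvalues with hlam
  have hspec : Δ = V * Matrix.diagonal (fun i => ((lam i : ℝ) : ℂ)) * Vᴴ := by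
    have h := hΔ.spectral_theorem
    rw [Unitary.conjStarAlgAut_apply] at h
    rw [← Matrix.star_eq_conjTranspose]
    exact h
  set Dsign : Matrix n n ℂ := Matrix.diagonal (fun i => ((Real.sign (lam i) : ℝ) : ℂ)) with hDsign
  set Dabs : Matrix n n ℂ := Matrix.diagonal (fun i => ((|lam i| : ℝ) : ℂ)) with hDabs
  refine ⟨V * Dsign * Vᴴ, ?_, ?_⟩
  · have hDsignH : Dsignᴴ = Dsign := by
      rw [hDsign, Matrix.diagonal_conjTranspose]
      have : (star fun i => ((Real.sign (lam i) : ℝ) : ℂ))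
          = fun i => ((Real.sign (lam i) : ℝ) : ℂ) := by
        funext i
        simp [Pi.star_apply, Complex.star_def, Complex.conj_ofReal]
      rw [this]
    have hconj : (V * Dsign * Vᴴ)ᴴ = V * Dsign * Vᴴ := by
      simp only [Matrix.conjTranspose_mul, Matrix.conjTranspose_conjTranspose, hDsignH,
        Matrix.mul_assoc]
    rw [hconj, aux_conj_mul _ _ _ hV1]
    have h1 : (1 : Matrix n n ℂ) = V * Matrix.diagonal (fun _ => (1 : ℂ)) * Vᴴ := by
      rw [Matrix.diagonal_one, Matrix.mul_one, hV2]
    rw [h1, hDsign, Matrix.diagonal_mul_diagonal]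
    have hsub : V * Matrix.diagonal (fun _ => (1 : ℂ)) * Vᴴ -
        V * Matrix.diagonal (fun i => ((Real.sign (lam i) : ℝ) : ℂ) * ((Real.sign (lam i) : ℝ) : ℂ)) * Vᴴ
        = V * Matrix.diagonal
            (fun i => ((1 - Real.sign (lam i) * Real.sign (lam i) : ℝ) : ℂ)) * Vᴴ := by
      rw [← Matrix.sub_mul, ← Matrix.mul_sub, Matrix.diagonal_sub]
      congr 2
      funext i
      push_cast
      ring
    rw [hsub]
    apply Matrix.PosSemidef.mul_mul_conjTranspose_same
    apply Matrix.posSemidef_diagonal_iff.mpr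
    intro i
    rw [Complex.zero_le_real]
    have := aux_sign_sq_le (lam i)
    linarith
  · have hSΔ : (V * Dsign * Vᴴ) * Δ = V * Dabs * Vᴴ := by
      rw [hspec, aux_conj_mul _ _ _ hV1, hDsign, hDabs, Matrix.diagonal_mul_diagonal]
      have hfun : (fun i => ((Real.sign (lam i) : ℝ) : ℂ) * ((lam i : ℝ) : ℂ))
          = fun i => ((|lam i| : ℝ) : ℂ) := by
        funext i
        rw [← Complex.ofReal_mul, aux_sign]
      rw [hfun]
    rw [hSΔ, aux_conj_diag_trace hV1]
    set hP := Matrix.posSemidef_conjTranspose_mul_self Δ with hPdef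
    have hApsd : (V * Dabs * Vᴴ).PosSemidef := by
      apply Matrix.PosSemidef.mul_mul_conjTranspose_same
      apply Matrix.posSemidef_diagonal_iff.mpr
      intro i
      rw [Complex.zero_le_real]
      exact abs_nonneg _
    have hA2 : (V * Dabs * Vᴴ) ^ 2 = Δᴴ * Δ := by
      rw [pow_two, aux_conj_mul _ _ _ hV1, hΔ.eq]
      conv_rhs => rw [hspec]
      rw [aux_conj_mul _ _ _ hV1, hDabs, Matrix.diagonal_mul_diagonal,
        Matrix.diagonal_mul_diagonal]
      have hfun : (fun i => ((|lam i| : ℝ) : ℂ) * ((|lam i| : ℝ) : ℂ))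
          = fun i => ((lam i : ℝ) : ℂ) * ((lam i : ℝ) : ℂ) := by
        funext i
        rw [← Complex.ofReal_mul, ← Complex.ofReal_mul, abs_mul_abs_self]
      rw [hfun]
    have hAsqrt : V * Dabs * Vᴴ = CFC.sqrt (Δᴴ * Δ) :=
      (CFC.sqrt_unique (by rw [← pow_two]; exact hA2) hApsd.nonneg).symm
    set W : Matrix n n ℂ := (hP.1.eigenvectorUnitary : Matrix n n ℂ) with hWdef
    have hW1 : Wᴴ * W = 1 := by
      rw [← Matrix.star_eq_conjTranspose]
      exact Matrix.mem_unitaryGroup_iff'.mp hP.1.eigenvectorUnitary.2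
    have hsqrt_eq : CFC.sqrt (Δᴴ * Δ) = W * Matrix.diagonal ((↑) ∘ Real.sqrt ∘ hP.1.eigenvalues) * Wᴴ := by
      rw [CFC.sqrt_eq_cfc, cfc_nnreal_eq_real _ _ hP.nonneg, hP.1.cfc_eq, IsHermitian.cfc,
        Unitary.conjStarAlgAut_apply, Matrix.star_eq_conjTranspose]
      congr 3
      funext i
      simp [Real.coe_sqrt, Real.coe_toNNReal', hP.eigenvalues_nonneg i]
    have htrsqrt : (CFC.sqrt (Δᴴ * Δ)).trace = ∑ i, ((Real.sqrt (hP.1.eigenvalues i) : ℝ) : ℂ) := by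
      rw [hsqrt_eq, aux_conj_diag_trace hW1]
      rfl
    have hkey : (∑ i, ((|lam i| : ℝ) : ℂ)) = ∑ i, ((Real.sqrt (hP.1.eigenvalues i) : ℝ) : ℂ) := by
      rw [← htrsqrt, ← hAsqrt, aux_conj_diag_trace hV1]
    rw [hkey, traceNorm]
    push_cast
    rfl

end Aux

section AuxKron

set_option linter.unusedSectionVars false

variable {ι κ : Type*} [Fintype ι] [Fintype κ] [DecidableEq ι] [DecidableEq κ]

lemma aux_kron_conjT (A : Matrix ι ι ℂ) (B : Matrix κ κ ℂ) :
    (A ⊗ₖ B)ᴴ = Aᴴ ⊗ₖ Bᴴ := by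
  ext ⟨i, k⟩ ⟨j, l⟩
  simp [Matrix.conjTranspose_apply, Matrix.kroneckerMap_apply, star_mul']

lemma aux_sub_kron (A B : Matrix ι ι ℂ) (C : Matrix κ κ ℂ) :
    (A - B) ⊗ₖ C = A ⊗ₖ C - B ⊗ₖ C := by
  ext ⟨i, k⟩ ⟨j, l⟩
  simp [Matrix.kroneckerMap_apply, sub_mul]

lemma aux_kron_psd {A : Matrix ι ι ℂ} {B : Matrix κ κ ℂ}
    (hA : A.PosSemidef) (hB : B.PosSemidef) : (A ⊗ₖ B).PosSemidef := by
  have hA2 : CFC.sqrt A * CFC.sqrt A = A := CFC.sqrt_mul_sqrt_self A hA.nonneg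
  have hB2 : CFC.sqrt B * CFC.sqrt B = B := CFC.sqrt_mul_sqrt_self B hB.nonneg
  have hAh : (CFC.sqrt A)ᴴ = CFC.sqrt A := (CFC.sqrt_nonneg A).posSemidef.1
  have hBh : (CFC.sqrt B)ᴴ = CFC.sqrt B := (CFC.sqrt_nonneg B).posSemidef.1
  have key : A ⊗ₖ B = (CFC.sqrt A ⊗ₖ CFC.sqrt B)ᴴ * (CFC.sqrt A ⊗ₖ CFC.sqrt B) := by
    rw [aux_kron_conjT, hAh, hBh, ← Matrix.mul_kronecker_mul, hA2, hB2]
  rw [key]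
  exact Matrix.posSemidef_conjTranspose_mul_self _

lemma aux_ptrace_kron (A : Matrix ι ι ℂ) (E : Matrix κ κ ℂ) :
    ptraceRight (A ⊗ₖ E) = E.trace • A := by
  ext i j
  simp only [ptraceRight, Matrix.kroneckerMap_apply, Matrix.smul_apply, Matrix.of_apply,
    Matrix.trace, Matrix.diag, smul_eq_mul]
  rw [Finset.sum_mul]
  exact Finset.sum_congr rfl fun x _ => mul_comm _ _

lemma aux_ptr_herm {M : Matrix (ι × κ) (ι × κ) ℂ} (hM : M.IsHermitian) :
    (ptraceRight M).IsHermitian := by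
  have hM' := hM
  unfold Matrix.IsHermitian at hM' ⊢
  ext i j
  rw [Matrix.conjTranspose_apply]
  simp only [ptraceRight, Matrix.of_apply, star_sum]
  apply Finset.sum_congr rfl
  intro k _
  rw [← Matrix.conjTranspose_apply, hM']

lemma aux_ptrace_trace (S : Matrix ι ι ℂ) (M : Matrix (ι × κ) (ι × κ) ℂ) :
    (S * ptraceRight M).trace = ((S ⊗ₖ (1 : Matrix κ κ ℂ)) * M).trace := by
  simp only [Matrix.trace, Matrix.diag, Matrix.mul_apply, ptraceRight, Matrix.of_apply,
    Matrix.kroneckerMap_apply, Matrix.one_apply]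
  rw [Fintype.sum_prod_type]
  apply Finset.sum_congr rfl
  intro i _
  simp only [Finset.mul_sum, Fintype.sum_prod_type, mul_ite, mul_one, mul_zero,
    ite_mul, zero_mul, Finset.sum_ite_eq, Finset.sum_ite_eq', Finset.mem_univ, if_true]
  rw [Finset.sum_comm]

end AuxKron

/-- Gentle measurement / Almost-As-Good-As-New lemma: let `ρ` be a density operator on
`ℂ^d`, `U` a unitary on `ℂ^d ⊗ ℂ^{d'}`, and `{Π₀, Π₁ = I − Π₀}` a projective measurement
with `Tr[Π₀ U(ρ ⊗ |0⟩⟨0|)U†] = 1 − ε`. Then the state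
`ρ̃ = Tr_{d'}[U†(Π₀ U(ρ⊗|0⟩⟨0|)U† Π₀ + Π₁ U(ρ⊗|0⟩⟨0|)U† Π₁)U]` obtained by measuring and
uncomputing satisfies `(1/2)‖ρ − ρ̃‖₁ ≤ √ε`. -/
theorem stmt12 (d d' : ℕ) [NeZero d']
    (ρ : Matrix (Fin d) (Fin d) ℂ) (hρ : ρ.PosSemidef) (hρtr : ρ.trace = 1)
    (U : Matrix (Fin d × Fin d') (Fin d × Fin d') ℂ)
    (hU : U ∈ Matrix.unitaryGroup (Fin d × Fin d') ℂ)
    (P0 : Matrix (Fin d × Fin d') (Fin d × Fin d') ℂ)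
    (hP0 : P0.IsHermitian) (hP0sq : P0 * P0 = P0)
    (ε : ℝ) (hε : 0 ≤ ε)
    (htr : (P0 * (U * (ρ ⊗ₖ Matrix.single (0 : Fin d') (0 : Fin d') (1 : ℂ)) * Uᴴ)).trace
        = ((1 - ε : ℝ) : ℂ)) :
    (1 / 2 : ℝ) *
        traceNorm (ρ -
          ptraceRight (Uᴴ *
            (P0 * (U * (ρ ⊗ₖ Matrix.single (0 : Fin d') (0 : Fin d') (1 : ℂ)) * Uᴴ) * P0 +
             (1 - P0) * (U * (ρ ⊗ₖ Matrix.single (0 : Fin d') (0 : Fin d') (1 : ℂ)) * Uᴴ) *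
               (1 - P0)) * U)) ≤
      Real.sqrt ε := by
  classical
  set E : Matrix (Fin d') (Fin d') ℂ := Matrix.single (0 : Fin d') (0 : Fin d') (1 : ℂ)
    with hE
  have hEtr : E.trace = 1 := by
    simp [hE, Matrix.trace, Matrix.diag, Matrix.single, Matrix.of_apply, and_self,
      Finset.sum_ite_eq']
  have hEps : E.PosSemidef := by
    refine Matrix.PosSemidef.of_dotProduct_mulVec_nonneg ?_ ?_
    · ext i j
      simp [hE, Matrix.single, Matrix.conjTranspose_apply, and_comm,
        apply_ite (star : ℂ → ℂ)]
    · intro x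
      have : star x ⬝ᵥ (E *ᵥ x) = star (x 0) * x 0 := by
        simp [hE, dotProduct, mulVec, Matrix.single, Matrix.of_apply, ite_and,
          ite_mul, zero_mul, mul_ite, mul_zero, Finset.sum_ite_eq, Finset.sum_ite_eq']
      rw [this]
      exact star_mul_self_nonneg _
  set X : Matrix (Fin d × Fin d') (Fin d × Fin d') ℂ := ρ ⊗ₖ E with hX
  set σ : Matrix (Fin d × Fin d') (Fin d × Fin d') ℂ := U * X * Uᴴ with hσ
  have hU1 : Uᴴ * U = 1 := by
    rw [← Matrix.star_eq_conjTranspose]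
    exact Matrix.mem_unitaryGroup_iff'.mp hU
  have hU2 : U * Uᴴ = 1 := by
    rw [← Matrix.star_eq_conjTranspose]
    exact Matrix.mem_unitaryGroup_iff.mp hU
  have hXpsd : X.PosSemidef := aux_kron_psd hρ hEps
  have hσpsd : σ.PosSemidef := hXpsd.mul_mul_conjTranspose_same U
  have hXtr : X.trace = 1 := by
    rw [hX, Matrix.trace_kronecker, hρtr, hEtr, mul_one]
  have hσtr : σ.trace = 1 := by
    rw [hσ, Matrix.trace_mul_cycle, hU1, Matrix.one_mul, hXtr]
  set P1 : Matrix (Fin d × Fin d') (Fin d × Fin d') ℂ := 1 - P0 with hP1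
  have hP1h : P1ᴴ = P1 := by
    rw [hP1, Matrix.conjTranspose_sub, Matrix.conjTranspose_one, hP0.eq]
  have hP1sq : P1 * P1 = P1 := by
    have hexp : ((1 : Matrix (Fin d × Fin d') (Fin d × Fin d') ℂ) - P0) * (1 - P0)
        = 1 - P0 - P0 + P0 * P0 := by noncomm_ring
    rw [hP1, hexp, hP0sq]
    abel
  have hσh : σᴴ = σ := hσpsd.1
  set Y : Matrix (Fin d × Fin d') (Fin d × Fin d') ℂ := P0 * σ * P0 + P1 * σ * P1 with hY
  have hYh : Yᴴ = Y := by
    rw [hY]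
    simp only [Matrix.conjTranspose_add, Matrix.conjTranspose_mul, hP0.eq, hP1h, hσh,
      Matrix.mul_assoc]
  set Z : Matrix (Fin d × Fin d') (Fin d × Fin d') ℂ := Uᴴ * Y * U with hZ
  have hZh : Z.IsHermitian := by
    show Zᴴ = Z
    rw [hZ]
    simp only [Matrix.conjTranspose_mul, Matrix.conjTranspose_conjTranspose, hYh,
      Matrix.mul_assoc]
  set Δ : Matrix (Fin d) (Fin d) ℂ := ρ - ptraceRight Z with hΔdef
  have hΔh : Δ.IsHermitian := hρ.1.sub (aux_ptr_herm hZh)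
  obtain ⟨S, hS1, hS2⟩ := aux_sign_matrix hΔh
  have htrP0 : ((P0 * σ).trace).re = 1 - ε := by
    rw [htr]
    exact Complex.ofReal_re _
  have htrP1 : ((P1 * σ).trace).re = ε := by
    rw [hP1, Matrix.sub_mul, Matrix.one_mul, Matrix.trace_sub, hσtr, htr]
    simp [Complex.sub_re, Complex.one_re, Complex.ofReal_re]
  set C : Matrix (Fin d × Fin d') (Fin d × Fin d') ℂ :=
    U * (S ⊗ₖ (1 : Matrix (Fin d') (Fin d') ℂ)) * Uᴴ with hC
  have hCh : Cᴴ = U * (Sᴴ ⊗ₖ (1 : Matrix (Fin d') (Fin d') ℂ)) * Uᴴ := by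
    rw [hC]
    simp only [Matrix.conjTranspose_mul, Matrix.conjTranspose_conjTranspose, aux_kron_conjT,
      Matrix.conjTranspose_one, Matrix.mul_assoc]
  have hCC : Cᴴ * C = U * ((Sᴴ * S) ⊗ₖ (1 : Matrix (Fin d') (Fin d') ℂ)) * Uᴴ := by
    rw [hCh, hC, aux_conj_mul _ _ _ hU1, ← Matrix.mul_kronecker_mul, Matrix.mul_one]
  have h1C : (1 - Cᴴ * C).PosSemidef := by
    rw [hCC]
    have hone : (1 : Matrix (Fin d × Fin d') (Fin d × Fin d') ℂ)
        = U * ((1 : Matrix (Fin d) (Fin d) ℂ) ⊗ₖ (1 : Matrix (Fin d') (Fin d') ℂ)) * Uᴴ := by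
      rw [Matrix.one_kronecker_one, Matrix.mul_one, hU2]
    rw [hone, ← Matrix.sub_mul, ← Matrix.mul_sub, ← aux_sub_kron]
    exact (aux_kron_psd hS1 Matrix.PosSemidef.one).mul_mul_conjTranspose_same U
  have hρptr : ptraceRight X = ρ := by
    rw [hX, aux_ptrace_kron, hEtr, one_smul]
  have hXeq : X = Uᴴ * σ * U := by
    rw [hσ]
    have : Uᴴ * (U * X * Uᴴ) * U = (Uᴴ * U) * X * (Uᴴ * U) := by
      simp only [Matrix.mul_assoc]
    rw [this, hU1, Matrix.one_mul, Matrix.mul_one]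
  have hcyc : ∀ W : Matrix (Fin d × Fin d') (Fin d × Fin d') ℂ,
      (((S ⊗ₖ (1 : Matrix (Fin d') (Fin d') ℂ))) * (Uᴴ * W * U)).trace = (C * W).trace := by
    intro W
    rw [hC]
    calc ((S ⊗ₖ (1 : Matrix (Fin d') (Fin d') ℂ)) * (Uᴴ * W * U)).trace
        = (((S ⊗ₖ (1 : Matrix (Fin d') (Fin d') ℂ)) * Uᴴ * W) * U).trace := by
          simp only [Matrix.mul_assoc]
      _ = (U * ((S ⊗ₖ (1 : Matrix (Fin d') (Fin d') ℂ)) * Uᴴ * W)).trace :=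
          (Matrix.trace_mul_comm _ _)
      _ = (U * (S ⊗ₖ (1 : Matrix (Fin d') (Fin d') ℂ)) * Uᴴ * W).trace := by
          simp only [Matrix.mul_assoc]
  have key : (S * Δ).trace = (C * (P0 * σ * P1)).trace + (C * (P1 * σ * P0)).trace := by
    have hXZ : X - Z = Uᴴ * (P0 * σ * P1 + P1 * σ * P0) * U := by
      rw [hXeq, hZ]
      have hfac : Uᴴ * σ * U - Uᴴ * Y * U = Uᴴ * (σ - Y) * U := by
        rw [← Matrix.sub_mul, ← Matrix.mul_sub]
      rw [hfac]
      have : σ - Y = P0 * σ * P1 + P1 * σ * P0 := by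
        rw [hY, hP1]
        noncomm_ring
      rw [this]
    calc (S * Δ).trace = (S * ptraceRight X).trace - (S * ptraceRight Z).trace := by
          rw [hΔdef, ← hρptr, Matrix.mul_sub, Matrix.trace_sub]
      _ = ((S ⊗ₖ (1 : Matrix (Fin d') (Fin d') ℂ)) * X).trace
          - ((S ⊗ₖ (1 : Matrix (Fin d') (Fin d') ℂ)) * Z).trace := by
          rw [aux_ptrace_trace, aux_ptrace_trace]
      _ = ((S ⊗ₖ (1 : Matrix (Fin d') (Fin d') ℂ)) * (X - Z)).trace := by
          rw [Matrix.mul_sub, Matrix.trace_sub]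
      _ = ((S ⊗ₖ (1 : Matrix (Fin d') (Fin d') ℂ))
            * (Uᴴ * (P0 * σ * P1 + P1 * σ * P0) * U)).trace := by rw [hXZ]
      _ = (C * (P0 * σ * P1 + P1 * σ * P0)).trace := hcyc _
      _ = _ := by rw [Matrix.mul_add, Matrix.trace_add]
  have hb1 := aux_key hσpsd h1C hP0.eq hP0sq hP1h hP1sq
  have hb2 := aux_key hσpsd h1C hP1h hP1sq hP0.eq hP0sq
  rw [htrP0, htrP1] at hb1 hb2
  have hsqle : Real.sqrt (1 - ε) ≤ 1 := Real.sqrt_le_one.mpr (by linarith)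
  have hterm1 : ((C * (P0 * σ * P1)).trace).re ≤ Real.sqrt ε := by
    calc ((C * (P0 * σ * P1)).trace).re ≤ ‖(C * (P0 * σ * P1)).trace‖ :=
          Complex.re_le_norm _
      _ ≤ Real.sqrt ε * Real.sqrt (1 - ε) := hb1
      _ ≤ Real.sqrt ε * 1 := by
          exact mul_le_mul_of_nonneg_left hsqle (Real.sqrt_nonneg _)
      _ = Real.sqrt ε := mul_one _
  have hterm2 : ((C * (P1 * σ * P0)).trace).re ≤ Real.sqrt ε := by
    calc ((C * (P1 * σ * P0)).trace).re ≤ ‖(C * (P1 * σ * P0)).trace‖ :=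
          Complex.re_le_norm _
      _ ≤ Real.sqrt (1 - ε) * Real.sqrt ε := hb2
      _ ≤ 1 * Real.sqrt ε := by
          exact mul_le_mul_of_nonneg_right hsqle (Real.sqrt_nonneg _)
      _ = Real.sqrt ε := one_mul _
  have htn : traceNorm Δ = ((S * Δ).trace).re := by
    rw [hS2, Complex.ofReal_re]
  have hfinal : traceNorm Δ ≤ 2 * Real.sqrt ε := by
    rw [htn, key, Complex.add_re]
    linarith
  linarith
end
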